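/- There is no configuration of 9 distinct lines in the real projective plane, not all through one common point, such that every point lying on at least two of the lines lies on at least three of them. In particular, the dual Hesse configuration cannot be realized over the reals. -/

import Mathlib

open RealInnerProductSpace

lemma pair_ratio {u v : ℝ} (huv : u ≠ v) (hs : 0 ≤ u * v) (h : |u| ≤ |v|) :
    v ≠ 0 ∧ 0 ≤ u / v ∧ u / v ≤ 1 := by
  have hv : v ≠ 0 := by
    rintro rfl
    rw [abs_zero, abs_nonpos_iff] at h
    exact huv h
  have hv2 : (0:ℝ) < |v| := abs_pos.2 hv
  have h1 : 0 ≤ u / v := by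
    have : u / v = (u * v) / (v * v) := by
      field_simp
    rw [this]
    exact div_nonneg hs (mul_self_nonneg v)
  refine ⟨hv, h1, ?_⟩
  have h2 : |u / v| ≤ 1 := by
    rw [abs_div]
    exact (div_le_one hv2).2 h
  exact (le_abs_self _).trans h2

lemma two_same_sign {α β γ : ℝ} (hab : α ≠ β) (hag : α ≠ γ) (hbg : β ≠ γ) :
    ∃ x y : ℝ, x ≠ y ∧ x ∈ ({α, β, γ} : Set ℝ) ∧ y ∈ ({α, β, γ} : Set ℝ) ∧
      y ≠ 0 ∧ 0 ≤ x / y ∧ x / y ≤ 1 := by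
  have key : ∀ u v : ℝ, u ≠ v → 0 ≤ u * v →
      u ∈ ({α, β, γ} : Set ℝ) → v ∈ ({α, β, γ} : Set ℝ) →
      ∃ x y : ℝ, x ≠ y ∧ x ∈ ({α, β, γ} : Set ℝ) ∧ y ∈ ({α, β, γ} : Set ℝ) ∧
      y ≠ 0 ∧ 0 ≤ x / y ∧ x / y ≤ 1 := by
    intro u v huv hs hu hv
    rcases le_total |u| |v| with h | h
    · obtain ⟨h1, h2, h3⟩ := pair_ratio huv hs h
      exact ⟨u, v, huv, hu, hv, h1, h2, h3⟩
    · obtain ⟨h1, h2, h3⟩ := pair_ratio huv.symm (by linarith [hs, mul_comm u v]) h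
      exact ⟨v, u, huv.symm, hv, hu, h1, h2, h3⟩
  rcases le_or_gt 0 α with ha | ha
  · rcases le_or_gt 0 β with hb | hb
    · exact key α β hab (by positivity) (by simp) (by simp)
    · rcases le_or_gt 0 γ with hg | hg
      · exact key α γ hag (by positivity) (by simp) (by simp)
      · exact key β γ hbg (by nlinarith) (by simp) (by simp)
  · rcases le_or_gt β 0 with hb | hb
    · exact key α β hab (by nlinarith) (by simp) (by simp)
    · rcases le_or_gt γ 0 with hg | hg
      · exact key α γ hag (by nlinarith) (by simp) (by simp)
      · exact key β γ hbg (by nlinarith) (by simp) (by simp)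


noncomputable section SGcore

variable {E : Type*} [NormedAddCommGroup E] [InnerProductSpace ℝ E]

lemma col_param {q r s : E} (hqr : q ≠ r) (h : Collinear ℝ ({q, r, s} : Set E)) :
    ∃ t : ℝ, s = q + t • (r - q) := by
  rw [collinear_iff_of_mem (Set.mem_insert q _)] at h
  obtain ⟨v, hv⟩ := h
  obtain ⟨tr, htr⟩ := hv r (by simp)
  obtain ⟨ts, hts⟩ := hv s (by simp)
  have htr0 : tr ≠ 0 := by
    rintro rfl
    simp only [zero_smul, zero_vadd] at htr
    exact hqr htr.symm
  refine ⟨ts / tr, ?_⟩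
  have hrv : r - q = tr • v := by rw [htr]; simp [vadd_eq_add]
  rw [hts, hrv, vadd_eq_add, smul_smul, div_mul_cancel₀ _ htr0, add_comm]

lemma col_of_param {p q r : E} (t : ℝ) (hp : p = q + t • (r - q)) :
    Collinear ℝ ({p, q, r} : Set E) := by
  rw [collinear_iff_exists_forall_eq_smul_vadd]
  refine ⟨q, r - q, ?_⟩
  intro x hx
  rcases hx with rfl | rfl | rfl
  · exact ⟨t, by rw [hp, vadd_eq_add, add_comm]⟩
  · exact ⟨0, by simp⟩
  · exact ⟨1, by rw [vadd_eq_add, one_smul]; abel⟩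

def footc (p q r : E) : ℝ := ⟪p - q, r - q⟫ / ⟪r - q, r - q⟫

def foot (p q r : E) : E := q + footc p q r • (r - q)

lemma foot_orth {q r : E} (p : E) (hqr : q ≠ r) : ⟪p - foot p q r, r - q⟫ = 0 := by
  have hne : (⟪r - q, r - q⟫ : ℝ) ≠ 0 :=
    inner_self_ne_zero.2 (sub_ne_zero.2 (Ne.symm hqr))
  have : p - foot p q r = (p - q) - footc p q r • (r - q) := by
    simp [foot]; abel
  rw [this, inner_sub_left, real_inner_smul_left, footc, div_mul_cancel₀ _ hne, sub_self]

lemma foot_min {q r : E} (p : E) (hqr : q ≠ r) (t : ℝ) :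
    ‖p - foot p q r‖ ≤ ‖p - (q + t • (r - q))‖ := by
  set x := p - foot p q r with hx
  have hy : p - (q + t • (r - q)) = x + (footc p q r - t) • (r - q) := by
    simp [hx, foot, sub_smul]; abel
  have horth : ⟪x, (footc p q r - t) • (r - q)⟫ = 0 := by
    rw [real_inner_smul_right, foot_orth p hqr, mul_zero]
  have hsq : ‖x + (footc p q r - t) • (r - q)‖ ^ 2
      = ‖x‖ ^ 2 + ‖(footc p q r - t) • (r - q)‖ ^ 2 := by
    rw [norm_add_sq_real, horth]; ring
  rw [hy]
  nlinarith [norm_nonneg x, norm_nonneg (x + (footc p q r - t) • (r - q)),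
    sq_nonneg ‖(footc p q r - t) • (r - q)‖]

lemma exists_noncol_triple {S : Finset E} (h : ¬ Collinear ℝ (S : Set E)) :
    ∃ p ∈ S, ∃ q ∈ S, ∃ r ∈ S, ¬ Collinear ℝ ({p, q, r} : Set E) := by
  by_contra hc
  push_neg at hc
  apply h
  by_cases hsub : ∃ q ∈ S, ∃ r ∈ S, q ≠ r
  · obtain ⟨q, hq, r, hr, hqr⟩ := hsub
    rw [collinear_iff_of_mem (Finset.mem_coe.mpr hq)]
    refine ⟨r - q, ?_⟩
    intro s hs
    obtain ⟨t, ht⟩ := col_param hqr (hc q hq r hr s hs)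
    exact ⟨t, by rw [ht, vadd_eq_add, add_comm]⟩
  · push_neg at hsub
    have : ((S : Set E)).Subsingleton := fun a ha b hb => hsub a ha b hb
    rcases this.eq_empty_or_singleton with hS | ⟨a, hS⟩ <;> rw [hS]
    · exact collinear_empty ℝ _
    · exact collinear_singleton ℝ _

/-- **Sylvester–Gallai theorem** (for finite point sets in a real inner product space). -/
theorem sylvester_gallai (S : Finset E) (hS : ¬ Collinear ℝ (S : Set E)) :
    ∃ q ∈ S, ∃ r ∈ S, q ≠ r ∧
      ∀ s ∈ S, Collinear ℝ ({q, r, s} : Set E) → s = q ∨ s = r := by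
  classical
  set T : Finset (E × E × E) :=
    (S ×ˢ S ×ˢ S).filter (fun x => ¬ Collinear ℝ ({x.1, x.2.1, x.2.2} : Set E)) with hT
  have hTne : T.Nonempty := by
    obtain ⟨p, hp, q, hq, r, hr, hcol⟩ := exists_noncol_triple hS
    exact ⟨(p, q, r), by simp [hT, Finset.mem_filter, Finset.mem_product, hp, hq, hr, hcol]⟩
  clear_value T
  obtain ⟨⟨p, q, r⟩, hmem, hmin⟩ :=
    T.exists_min_image (fun x => ‖x.1 - foot x.1 x.2.1 x.2.2‖) hTne
  simp only [hT, Finset.mem_filter, Finset.mem_product] at hmem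
  obtain ⟨⟨hpS, hqS, hrS⟩, hncol⟩ := hmem
  -- basic facts
  have hqr : q ≠ r := by
    rintro rfl
    exact hncol (by
      have : ({p, q, q} : Set E) = {p, q} := by simp
      rw [this]; exact collinear_pair ℝ p q)
  have hv : r - q ≠ 0 := sub_ne_zero.2 (Ne.symm hqr)
  set f := foot p q r with hf
  have hpf : p ≠ f := by
    rintro h
    exact hncol (col_of_param (footc p q r) h)
  refine ⟨q, hqS, r, hrS, hqr, ?_⟩
  by_contra hbad
  push_neg at hbad
  obtain ⟨s, hsS, hcolqrs, hsq, hsr⟩ := hbad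
  obtain ⟨ts, hts⟩ := col_param hqr hcolqrs
  -- coordinates on the line, with origin f and direction v := r - q
  set v := r - q with hvdef
  set c₀ := footc p q r with hc₀
  have hfq : q = f + (-c₀) • v := by rw [hf, foot]; module
  have hfr : r = f + (1 - c₀) • v := by rw [hf, foot, hvdef]; module
  have hfs : s = f + (ts - c₀) • v := by rw [hts, hfq]; module
  have hinj : ∀ a b : ℝ, f + a • v = f + b • v → a = b := by
    intro a b hab
    rw [add_left_cancel_iff] at hab
    exact smul_left_injective ℝ hv hab
  -- distinct coordinates of q, r, s on the line through f with direction v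
  have hab : (-c₀ : ℝ) ≠ 1 - c₀ := by
    intro h
    have h01 : (0:ℝ) = 1 := by linarith
    exact absurd h01 zero_ne_one
  have hag : (-c₀ : ℝ) ≠ ts - c₀ := by
    intro h
    apply hsq
    rw [hfs, ← h, ← hfq]
  have hbg : (1 - c₀ : ℝ) ≠ ts - c₀ := by
    intro h
    apply hsr
    rw [hfs, ← h, ← hfr]
  obtain ⟨x, y, hxy, hxm, hym, hy0, hr0, hr1⟩ := two_same_sign hab hag hbg
  set b := f + x • v with hbdef
  set c := f + y • v with hcdef
  have hbS : b ∈ S := by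
    rcases hxm with rfl | rfl | rfl
    · rw [hbdef, ← hfq]; exact hqS
    · rw [hbdef, ← hfr]; exact hrS
    · rw [hbdef, ← hfs]; exact hsS
  have hcS : c ∈ S := by
    rcases hym with rfl | rfl | rfl
    · rw [hcdef, ← hfq]; exact hqS
    · rw [hcdef, ← hfr]; exact hrS
    · rw [hcdef, ← hfs]; exact hsS
  have hbc : b ≠ c := fun h => hxy (hinj x y h)
  have hcf : c - f = y • v := by rw [hcdef]; abel
  have hline : ∀ z : ℝ, f + z • v = q + (c₀ + z) • (r - q) := by
    intro z; rw [← hvdef, hfq]; module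
  have hpc : p ≠ c := by
    intro h
    exact hncol (col_of_param (c₀ + y) (by rw [h, hcdef, hline y]))
  have hncolbpc : ¬ Collinear ℝ ({b, p, c} : Set E) := by
    intro hcol
    have heq : ({b, p, c} : Set E) = {b, c, p} := by rw [Set.pair_comm p c]
    rw [heq] at hcol
    obtain ⟨t, htp⟩ := col_param hbc hcol
    apply hncol
    refine col_of_param (c₀ + (x + t * (y - x))) ?_
    rw [← hline]
    rw [htp, hbdef, hcdef]
    module
  -- set up scalar quantities
  set pp := ‖p - f‖ with hppdef
  set cc := ‖c - f‖ with hccdef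
  have hppos : 0 < pp := by
    rw [hppdef, norm_pos_iff, sub_ne_zero]; exact hpf
  have hcpos : 0 < cc := by
    rw [hccdef, norm_pos_iff, sub_ne_zero]
    intro h
    rw [hcdef] at h
    have := hinj y 0 (by rw [zero_smul, add_zero, h])
    exact hy0 this
  have horthPC : ⟪p - f, c - f⟫ = 0 := by
    rw [hcf, real_inner_smul_right]
    have := foot_orth p hqr
    rw [← hf, ← hvdef] at this
    rw [this, mul_zero]
  have horthPC2 : ⟪c - f, p - f⟫ = 0 := by rw [real_inner_comm]; exact horthPC
  have hPC : ‖(p - f) - (c - f)‖ ^ 2 = pp ^ 2 + cc ^ 2 := by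
    rw [norm_sub_sq_real, horthPC]; ring
  set lam := cc ^ 2 / (pp ^ 2 + cc ^ 2) with hlamdef
  have hden : (0:ℝ) < pp ^ 2 + cc ^ 2 := by positivity
  have hlam : lam * (pp ^ 2 + cc ^ 2) = cc ^ 2 := by
    rw [hlamdef, div_mul_cancel₀ _ (ne_of_gt hden)]
  set τ := 1 - x / y with hτdef
  have hτ0 : 0 ≤ τ := by rw [hτdef]; linarith
  have hτ1 : τ ≤ 1 := by rw [hτdef]; linarith
  set t₀ := 1 - τ * lam with ht₀def
  clear_value f v c₀ b c pp cc lam τ t₀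
  have hbc2 : b - c = (-τ) • (c - f) := by
    rw [hcf, smul_smul, hbdef, hcdef, hτdef]
    have : -(1 - x / y) * y = x - y := by field_simp; ring
    rw [this, sub_smul]
    abel
  have hkey : b - (p + t₀ • (c - p)) = (-τ) • ((c - f) + lam • ((p - f) - (c - f))) := by
    have h1 : b = c + (-τ) • (c - f) := by rw [← hbc2]; abel
    rw [h1, ht₀def]
    module
  set N := ‖(c - f) + lam • ((p - f) - (c - f))‖ with hNdef
  clear_value N
  have hN2 : N ^ 2 = cc ^ 2 - 2 * lam * cc ^ 2 + lam ^ 2 * (pp ^ 2 + cc ^ 2) := by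
    rw [hNdef, norm_add_sq_real, real_inner_smul_right, inner_sub_right,
      horthPC2, real_inner_self_eq_norm_sq,
      norm_smul, Real.norm_eq_abs, mul_pow, sq_abs, hPC, ← hccdef]
    ring
  have hlam1 : lam < 1 := by
    rw [hlamdef, div_lt_one hden]
    nlinarith
  have e1 : lam ^ 2 * (pp ^ 2 + cc ^ 2) = lam * cc ^ 2 := by
    rw [pow_two, mul_assoc, hlam]
  have hN2' : N ^ 2 = cc ^ 2 * (1 - lam) := by rw [hN2, e1]; ring
  have e2 : (1 - lam) * (pp ^ 2 + cc ^ 2) = pp ^ 2 := by linear_combination -hlam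
  have hNlt : N ^ 2 < pp ^ 2 := by
    nlinarith [hN2', e2, mul_pos (sub_pos.2 hlam1) (pow_pos hppos 2)]
  have hNnn : 0 ≤ N := hNdef ▸ norm_nonneg _
  have hfin : ‖b - foot b p c‖ < pp := by
    have h1 : ‖b - foot b p c‖ ≤ ‖b - (p + t₀ • (c - p))‖ := foot_min b hpc t₀
    have h2 : ‖b - (p + t₀ • (c - p))‖ = |τ| * N := by
      rw [hkey, norm_smul, Real.norm_eq_abs, abs_neg, hNdef]
    have h3 : |τ| * N ≤ N := by
      have habs : |τ| ≤ 1 := abs_le.2 ⟨by linarith, hτ1⟩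
      exact mul_le_of_le_one_left hNnn habs
    have h4 : N < pp := lt_of_pow_lt_pow_left₀ 2 hppos.le hNlt
    calc ‖b - foot b p c‖ ≤ ‖b - (p + t₀ • (c - p))‖ := h1
      _ = |τ| * N := h2
      _ ≤ N := h3
      _ < pp := h4
  have hminb : pp ≤ ‖b - foot b p c‖ := by
    have hmem : (b, p, c) ∈ T := by
      simp only [hT, Finset.mem_filter, Finset.mem_product]
      exact ⟨⟨hbS, hpS, hcS⟩, hncolbpc⟩
    have := hmin (b, p, c) hmem
    simpa [hf, hppdef] using this
  linarith


end SGcore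

section Transfer

open RealInnerProductSpace

noncomputable abbrev E3 : Type := EuclideanSpace ℝ (Fin 3)

noncomputable def toE3 (v : Fin 3 → ℝ) : E3 := (WithLp.equiv 2 (Fin 3 → ℝ)).symm v

lemma toE3_injective : Function.Injective toE3 := (WithLp.equiv 2 (Fin 3 → ℝ)).symm.injective

lemma toE3_apply (v : Fin 3 → ℝ) (i : Fin 3) : toE3 v i = v i := rfl

lemma toE3_ne_zero {v : Fin 3 → ℝ} (hv : v ≠ 0) : toE3 v ≠ 0 := by
  intro h
  apply hv
  have : toE3 0 = 0 := rfl
  exact toE3_injective (h.trans this.symm)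

lemma inner_toE3 (a b : Fin 3 → ℝ) : (⟪toE3 a, toE3 b⟫ : ℝ) = ∑ i, a i * b i := by
  rw [PiLp.inner_apply]
  simp [RCLike.inner_apply, toE3_apply]
  exact Finset.sum_congr rfl fun i _ => mul_comm _ _

lemma fromE3_toE3 (n : E3) : toE3 (WithLp.equiv 2 (Fin 3 → ℝ) n) = n :=
  (WithLp.equiv 2 (Fin 3 → ℝ)).symm_apply_apply n

lemma normal_of_span2 (x y : E3) :
    ∃ n : E3, n ≠ 0 ∧ ∀ u ∈ Submodule.span ℝ ({x, y} : Set E3), (⟪u, n⟫ : ℝ) = 0 := by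
  classical
  set W := Submodule.span ℝ ({x, y} : Set E3) with hWdef
  have hfr : Module.finrank ℝ W ≤ 2 := by
    have h1 := finrank_span_le_card (R := ℝ) ({x, y} : Set E3)
    have h2 : ({x, y} : Set E3).toFinset.card ≤ 2 := by
      rw [Set.toFinset_insert, Set.toFinset_singleton]
      exact (Finset.card_insert_le _ _).trans (by simp)
    exact h1.trans h2
  have hW : W ≠ ⊤ := by
    intro h
    rw [h, finrank_top, finrank_euclideanSpace_fin] at hfr
    omega
  have hbot : Wᗮ ≠ ⊥ := fun h => hW (Submodule.orthogonal_eq_bot_iff.1 h)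
  obtain ⟨n, hn, hn0⟩ := Submodule.exists_mem_ne_zero_of_ne_bot hbot
  exact ⟨n, hn0, fun u hu => (Submodule.mem_orthogonal W n).1 hn u hu⟩

lemma dep3 (n x y z : E3) (hn : n ≠ 0) (hx : (⟪x, n⟫ : ℝ) = 0) (hy : (⟪y, n⟫ : ℝ) = 0)
    (hz : (⟪z, n⟫ : ℝ) = 0) :
    ∃ a b c : ℝ, a • x + b • y + c • z = 0 ∧ ¬(a = 0 ∧ b = 0 ∧ c = 0) := by
  classical
  set W := (Submodule.span ℝ ({n} : Set E3))ᗮ with hWdef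
  have hfr : Module.finrank ℝ W = 2 := by
    have h1 := Submodule.finrank_add_finrank_orthogonal (K := Submodule.span ℝ ({n} : Set E3))
    rw [finrank_span_singleton hn, finrank_euclideanSpace_fin, ← hWdef] at h1
    omega
  have hmem : ∀ u : E3, (⟪u, n⟫ : ℝ) = 0 → u ∈ W := by
    intro u hu
    rw [hWdef, Submodule.mem_orthogonal]
    intro v hv
    rw [Submodule.mem_span_singleton] at hv
    obtain ⟨c, rfl⟩ := hv
    rw [real_inner_smul_left, real_inner_comm, hu, mul_zero]
  set vv : Fin 3 → W := ![⟨x, hmem x hx⟩, ⟨y, hmem y hy⟩, ⟨z, hmem z hz⟩] with hvv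
  have hnli : ¬ LinearIndependent ℝ vv := by
    intro h
    have := h.fintype_card_le_finrank
    rw [hfr, Fintype.card_fin] at this
    omega
  rw [Fintype.not_linearIndependent_iff] at hnli
  obtain ⟨g, hg, i, hi⟩ := hnli
  refine ⟨g 0, g 1, g 2, ?_, ?_⟩
  · have := congrArg (Subtype.val : W → E3) hg
    rw [Submodule.coe_sum] at this
    simp only [Fin.sum_univ_three] at this
    simpa [hvv] using this
  · rintro ⟨h0, h1, h2⟩
    fin_cases i <;> simp_all

lemma col_of_dep {x y z : E3} {a b c : ℝ} (h : a • x + b • y + c • z = 0)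
    (hsum : a + b + c = 0) (hne : ¬(a = 0 ∧ b = 0 ∧ c = 0)) :
    Collinear ℝ ({x, y, z} : Set E3) := by
  by_cases hc : c = 0
  · subst hc
    by_cases hb : b = 0
    · exact absurd ⟨by linarith, hb, rfl⟩ hne
    · have hyx : y = x := by
        have ha : a = -b := by linarith
        rw [zero_smul, add_zero, ha, neg_smul] at h
        have h0 : b • (y - x) = 0 := by rw [← h, smul_sub]; abel
        have := (smul_eq_zero.1 h0).resolve_left hb
        exact sub_eq_zero.1 this
      rw [hyx]
      have heq : ({x, x, z} : Set E3) = {x, z} := by simp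
      rw [heq]
      exact collinear_pair ℝ x z
  · have h1 : c • z = -(a • x) - b • y := by
      have h2 : c • z = (a • x + b • y + c • z) - a • x - b • y := by abel
      rw [h, zero_sub] at h2
      exact h2
    have hz : z = x + (-b / c) • (y - x) := by
      apply smul_right_injective E3 hc
      show c • z = c • (x + (-b / c) • (y - x))
      have hmul : c * (-b / c) = -b := by field_simp
      rw [h1, smul_add, smul_smul, hmul]
      have ha : a = -b - c := by linarith
      rw [ha]
      module
    rw [collinear_iff_of_mem (show x ∈ ({x, y, z} : Set E3) by simp)]
    refine ⟨y - x, ?_⟩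
    intro p hp
    simp only [Set.mem_insert_iff, Set.mem_singleton_iff] at hp
    rcases hp with rfl | rfl | rfl
    · exact ⟨0, by simp⟩
    · exact ⟨1, by rw [vadd_eq_add, one_smul]; abel⟩
    · exact ⟨-b / c, by rw [hz, vadd_eq_add, add_comm]⟩

end Transfer

lemma exists_functional (F : Finset (Fin 3 → ℝ)) :
    ∃ w : Fin 3 → ℝ, ∀ a ∈ F, a ≠ 0 → ∑ i, a i * w i ≠ 0 := by
  classical
  induction F using Finset.induction_on with
  | empty => exact ⟨0, by simp⟩
  | @insert a F' ha ih =>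
    obtain ⟨w, hw⟩ := ih
    by_cases haz : a = 0
    · refine ⟨w, ?_⟩
      intro b hb hbnz
      rcases Finset.mem_insert.1 hb with rfl | hb'
      · exact absurd haz hbnz
      · exact hw b hb' hbnz
    · have hexp : ∀ (f : Fin 3 → ℝ) (t : ℝ),
          ∑ i, f i * (w + t • a) i = (∑ i, f i * w i) + t * ∑ i, f i * a i := by
        intro f t
        rw [Finset.mul_sum, ← Finset.sum_add_distrib]
        apply Finset.sum_congr rfl
        intro i _
        simp [mul_add]
        ring
      have hS : (∑ i, a i * a i) ≠ 0 := by
        intro h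
        apply haz
        funext i
        have h1 : ∀ j ∈ Finset.univ, (0:ℝ) ≤ a j * a j := fun j _ => mul_self_nonneg _
        have := (Finset.sum_eq_zero_iff_of_nonneg h1).1 h i (Finset.mem_univ i)
        have h2 : a i = 0 := by nlinarith [this]
        simpa using h2
      by_cases h0 : ∑ i, a i * w i = 0
      · set bad : Finset ℝ :=
          insert 0 (F'.image fun f => -(∑ i, f i * w i) / (∑ i, f i * a i)) with hbad
        obtain ⟨t, ht⟩ := Infinite.exists_notMem_finset bad
        have ht0 : t ≠ 0 := fun h => ht (by rw [hbad, h]; exact Finset.mem_insert_self _ _)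
        refine ⟨w + t • a, ?_⟩
        intro b hb hbnz
        rcases Finset.mem_insert.1 hb with rfl | hb'
        · rw [hexp, h0, zero_add]
          exact mul_ne_zero ht0 hS
        · rw [hexp]
          by_cases hba : ∑ i, b i * a i = 0
          · rw [hba, mul_zero, add_zero]
            exact hw b hb' hbnz
          · intro hzero
            apply ht
            rw [hbad]
            apply Finset.mem_insert_of_mem
            apply Finset.mem_image.2
            refine ⟨b, hb', ?_⟩
            field_simp
            linarith
      · refine ⟨w, ?_⟩
        intro b hb hbnz
        rcases Finset.mem_insert.1 hb with rfl | hb'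
        · exact h0
        · exact hw b hb' hbnz

open RealInnerProductSpace in
lemma pair_linear (w : Fin 3 → ℝ) (a b c : ℝ) (x y z : Fin 3 → ℝ)
    (h : a • toE3 x + b • toE3 y + c • toE3 z = 0) :
    a * (∑ i, x i * w i) + b * (∑ i, y i * w i) + c * (∑ i, z i * w i) = 0 := by
  have h' : a • x + b • y + c • z = 0 := by
    apply toE3_injective
    have hh : toE3 (a • x + b • y + c • z) = a • toE3 x + b • toE3 y + c • toE3 z := by
      simp only [toE3, WithLp.equiv_symm_apply, WithLp.toLp_add, WithLp.toLp_smul]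
    rw [hh, h]
    rfl
  have h2 := congrArg (fun v : Fin 3 → ℝ => ∑ i, v i * w i) h'
  simp only [Pi.add_apply, Pi.smul_apply, smul_eq_mul, add_mul,
    Finset.sum_add_distrib, Finset.sum_const_zero, Pi.zero_apply, zero_mul] at h2
  rw [Finset.mul_sum, Finset.mul_sum, Finset.mul_sum]
  rw [← h2]
  congr 1
  · congr 1
    · exact Finset.sum_congr rfl fun i _ => by ring
    · exact Finset.sum_congr rfl fun i _ => by ring
  · exact Finset.sum_congr rfl fun i _ => by ring

open scoped LinearAlgebra.Projectivization

/-- A point of the real projective plane lies on a line (a point of the dual projective plane,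
given by a nonzero linear form up to scalar) if the standard pairing of representatives
vanishes. -/
def OnLine (p ℓ : Projectivization ℝ (Fin 3 → ℝ)) : Prop :=
  ∑ i, p.rep i * ℓ.rep i = 0

open RealInnerProductSpace in
/-- There is no configuration of 9 distinct lines in the real projective plane, not all through
one common point, such that every point lying on at least two of the lines lies on at least
three of them.  (In particular, the dual Hesse configuration cannot be realized over the
reals.) -/
theorem no_real_dual_hesse :
    ¬ ∃ L : Finset (Projectivization ℝ (Fin 3 → ℝ)),
      L.card = 9 ∧
      (¬ ∃ p : Projectivization ℝ (Fin 3 → ℝ), ∀ ℓ ∈ L, OnLine p ℓ) ∧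
      (∀ p : Projectivization ℝ (Fin 3 → ℝ),
        2 ≤ {ℓ ∈ (L : Set (Projectivization ℝ (Fin 3 → ℝ))) | OnLine p ℓ}.ncard →
        3 ≤ {ℓ ∈ (L : Set (Projectivization ℝ (Fin 3 → ℝ))) | OnLine p ℓ}.ncard) := by
  classical
  rintro ⟨L, hcard, h2, h3⟩
  obtain ⟨w, hw⟩ := exists_functional (L.image Projectivization.rep)
  have hwL : ∀ ℓ ∈ L, (∑ i, ℓ.rep i * w i) ≠ 0 := fun ℓ hℓ =>
    hw _ (Finset.mem_image_of_mem _ hℓ) (Projectivization.rep_nonzero ℓ)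
  set d : Projectivization ℝ (Fin 3 → ℝ) → ℝ := fun ℓ => ∑ i, ℓ.rep i * w i with hd
  set ψ : Projectivization ℝ (Fin 3 → ℝ) → (Fin 3 → ℝ) := fun ℓ => (d ℓ)⁻¹ • ℓ.rep with hψ
  set φ : Projectivization ℝ (Fin 3 → ℝ) → E3 := fun ℓ => toE3 (ψ ℓ) with hφ
  have hψ1 : ∀ ℓ ∈ L, ∑ i, ψ ℓ i * w i = 1 := by
    intro ℓ hℓ
    have hexp : ∑ i, ψ ℓ i * w i = (d ℓ)⁻¹ * ∑ i, ℓ.rep i * w i := by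
      rw [hψ, Finset.mul_sum]
      exact Finset.sum_congr rfl fun i _ => by simp [mul_assoc]
    rw [hexp]
    exact inv_mul_cancel₀ (hwL ℓ hℓ)
  have hrepψ : ∀ ℓ ∈ L, ℓ.rep = d ℓ • ψ ℓ := by
    intro ℓ hℓ
    rw [hψ]
    simp only [smul_smul, mul_inv_cancel₀ (hwL ℓ hℓ), one_smul]
    rw [mul_inv_cancel₀ (show d ℓ ≠ 0 from hwL ℓ hℓ), one_smul]
  have hinj : ∀ ℓ ∈ L, ∀ m ∈ L, φ ℓ = φ m → ℓ = m := by
    intro ℓ hℓ m hm h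
    have hψeq : ψ ℓ = ψ m := toE3_injective h
    rw [← Projectivization.mk_rep ℓ, ← Projectivization.mk_rep m,
      Projectivization.mk_eq_mk_iff']
    refine ⟨d ℓ * (d m)⁻¹, ?_⟩
    calc (d ℓ * (d m)⁻¹) • m.rep = d ℓ • ((d m)⁻¹ • m.rep) := by rw [smul_smul]
      _ = d ℓ • ψ m := by rw [hψ]
      _ = d ℓ • ψ ℓ := by rw [hψeq]
      _ = ℓ.rep := (hrepψ ℓ hℓ).symm
  -- transfer of incidence
  have hpair : ∀ (nE : Fin 3 → ℝ) (hnE : nE ≠ 0), ∀ ℓ ∈ L,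
      (OnLine (Projectivization.mk ℝ nE hnE) ℓ ↔ (⟪φ ℓ, toE3 nE⟫ : ℝ) = 0) := by
    intro nE hnE ℓ hℓ
    obtain ⟨a, ha⟩ := Projectivization.exists_smul_eq_mk_rep ℝ nE hnE
    have hinner : (⟪φ ℓ, toE3 nE⟫ : ℝ) = (d ℓ)⁻¹ * ∑ i, ℓ.rep i * nE i := by
      rw [hφ, inner_toE3, hψ, Finset.mul_sum]
      exact Finset.sum_congr rfl fun i _ => by simp [mul_assoc]
    have hsum : ∑ i, (Projectivization.mk ℝ nE hnE).rep i * ℓ.rep i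
        = (a : ℝ) * ∑ i, ℓ.rep i * nE i := by
      rw [← ha, Finset.mul_sum]
      exact Finset.sum_congr rfl fun i _ => by
        simp [Units.smul_def]
        ring
    constructor
    · intro hO
      have h0 : (a : ℝ) * ∑ i, ℓ.rep i * nE i = 0 := by rw [← hsum]; exact hO
      have : ∑ i, ℓ.rep i * nE i = 0 :=
        (mul_eq_zero.1 h0).resolve_left (Units.ne_zero a)
      rw [hinner, this, mul_zero]
    · intro hI
      have : ∑ i, ℓ.rep i * nE i = 0 := by
        rcases mul_eq_zero.1 (hinner ▸ hI) with h | h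
        · exact absurd h (inv_ne_zero (hwL ℓ hℓ))
        · exact h
      show ∑ i, (Projectivization.mk ℝ nE hnE).rep i * ℓ.rep i = 0
      rw [hsum, this, mul_zero]
  set A : Finset E3 := L.image φ with hA
  have hAncol : ¬ Collinear ℝ (A : Set E3) := by
    intro hcol
    rw [collinear_iff_exists_forall_eq_smul_vadd] at hcol
    obtain ⟨p₀, v, hv⟩ := hcol
    obtain ⟨n, hn0, hn⟩ := normal_of_span2 p₀ v
    set nE := WithLp.equiv 2 (Fin 3 → ℝ) n with hnE
    have htoE : toE3 nE = n := fromE3_toE3 n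
    have hnE0 : nE ≠ 0 := by
      intro h
      apply hn0
      rw [← htoE, h]
      rfl
    apply h2
    refine ⟨Projectivization.mk ℝ nE hnE0, ?_⟩
    intro ℓ hℓ
    rw [hpair nE hnE0 ℓ hℓ, htoE]
    obtain ⟨t, hr⟩ := hv (φ ℓ) (Finset.mem_coe.2 (Finset.mem_image_of_mem φ hℓ))
    have hmem : φ ℓ ∈ Submodule.span ℝ ({p₀, v} : Set E3) := by
      rw [hr, vadd_eq_add]
      exact Submodule.add_mem _
        (Submodule.smul_mem _ _ (Submodule.subset_span (by simp)))
        (Submodule.subset_span (by simp))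
    exact hn _ hmem
  obtain ⟨aq, haq, br, hbr, habne, hord⟩ := sylvester_gallai A hAncol
  obtain ⟨q, hqL, hq⟩ := Finset.mem_image.1 haq
  obtain ⟨r, hrL, hr⟩ := Finset.mem_image.1 hbr
  rw [← hq, ← hr] at hord habne
  have hqr : q ≠ r := by rintro rfl; exact habne rfl
  obtain ⟨n, hn0, hn⟩ := normal_of_span2 (φ q) (φ r)
  set nE := WithLp.equiv 2 (Fin 3 → ℝ) n with hnE
  have htoE : toE3 nE = n := fromE3_toE3 n
  have hnE0 : nE ≠ 0 := by
    intro h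
    apply hn0
    rw [← htoE, h]
    rfl
  set p := Projectivization.mk ℝ nE hnE0 with hp
  have hiq : (⟪φ q, n⟫ : ℝ) = 0 := hn _ (Submodule.subset_span (by simp))
  have hir : (⟪φ r, n⟫ : ℝ) = 0 := hn _ (Submodule.subset_span (by simp))
  have hOq : OnLine p q := (hpair nE hnE0 q hqL).2 (by rw [htoE]; exact hiq)
  have hOr : OnLine p r := (hpair nE hnE0 r hrL).2 (by rw [htoE]; exact hir)
  have hsub : ∀ ℓ ∈ L, OnLine p ℓ → ℓ = q ∨ ℓ = r := by
    intro ℓ hℓ hO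
    have hiℓ : (⟪φ ℓ, n⟫ : ℝ) = 0 := by
      have := (hpair nE hnE0 ℓ hℓ).1 hO
      rwa [htoE] at this
    obtain ⟨a, b, c, hdep, hne⟩ := dep3 n (φ q) (φ r) (φ ℓ) hn0 hiq hir hiℓ
    have hsum : a + b + c = 0 := by
      have hdep' : a • toE3 (ψ q) + b • toE3 (ψ r) + c • toE3 (ψ ℓ) = 0 := by
        rw [hφ] at hdep; exact hdep
      have := pair_linear w a b c (ψ q) (ψ r) (ψ ℓ) hdep'
      rw [hψ1 q hqL, hψ1 r hrL, hψ1 ℓ hℓ] at this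
      linarith
    have hcol := col_of_dep hdep hsum hne
    rcases hord (φ ℓ) (Finset.mem_image_of_mem φ hℓ) hcol with h | h
    · exact Or.inl (hinj ℓ hℓ q hqL h)
    · exact Or.inr (hinj ℓ hℓ r hrL h)
  have hset : {ℓ ∈ (L : Set (Projectivization ℝ (Fin 3 → ℝ))) | OnLine p ℓ} = {q, r} := by
    ext ℓ
    simp only [Set.mem_setOf_eq, Set.mem_insert_iff, Set.mem_singleton_iff, Finset.mem_coe]
    constructor
    · rintro ⟨hℓ, hO⟩; exact hsub ℓ hℓ hO
    · rintro (rfl | rfl)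
      exacts [⟨hqL, hOq⟩, ⟨hrL, hOr⟩]
  have hle := h3 p (by rw [hset, Set.ncard_pair hqr])
  rw [hset, Set.ncard_pair hqr] at hle
  omega
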